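/- Let $\mathcal{S}$ be a collection of cubes in $\mathbb{R}^n$ that is sparse in the sense that there exist pairwise disjoint measurable subsets $\mathcal{E}(I) \subseteq I$ for $I \in \mathcal{S}$ with $|\mathcal{E}(I)| \geq c |I|$ for some fixed $c > 0$. Then for all nonnegative $f, g \in L^2(\mathbb{R}^n)$, $\sum_{I \in \mathcal{S}} |I| \cdot \left(|I|^{-1}\int_{5I} f\right) \left(|I|^{-1}\int_I g\right) \leq C_{c,n} \|f\|_{L^2} \|g\|_{L^2}$. -/

import Mathlib

open MeasureTheory Set Metric
open scoped ENNReal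

namespace SparseAux


theorem tsum_cs {ι : Type} [Countable ι] (u v : ι → ℝ≥0∞) :
    ∑' i, u i * v i ≤ (∑' i, u i ^ 2) ^ ((1:ℝ)/2) * (∑' i, v i ^ 2) ^ ((1:ℝ)/2) := by
  letI : MeasurableSpace ι := ⊤
  haveI : MeasurableSingletonClass ι := ⟨fun _ => trivial⟩
  have h2 : ∀ w : ι → ℝ≥0∞, ∑' i, w i ^ 2 = ∑' i, w i ^ (2:ℝ) := by
    intro w; congr 1; funext i; rw [← ENNReal.rpow_natCast]; norm_num
  rw [← lintegral_count, h2 u, h2 v, ← lintegral_count, ← lintegral_count]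
  have h22 : Real.HolderConjugate 2 2 := Real.HolderConjugate.two_two
  exact ENNReal.lintegral_mul_le_Lp_mul_Lq Measure.count h22
    (f := u) (g := v) (measurable_from_top).aemeasurable (measurable_from_top).aemeasurable


theorem geom_aux (a : ℝ≥0∞) :
    ∑' k : ℤ, (if (2:ℝ≥0∞) ^ (k-1) < a then (2:ℝ≥0∞) ^ k else 0) ≤ 4 * a := by
  rcases eq_or_ne a 0 with rfl | ha0
  · have : ∀ k : ℤ, (if (2:ℝ≥0∞) ^ (k-1) < 0 then (2:ℝ≥0∞) ^ k else 0) = 0 := by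
      intro k; rw [if_neg]; exact not_lt_of_ge (zero_le)
    simp [this]
  rcases eq_or_ne a ⊤ with rfl | hat
  · rw [ENNReal.mul_top (by norm_num)]; exact le_top
  obtain ⟨K, hK⟩ := ENNReal.exists_mem_Ioc_zpow ha0 hat (by norm_num) (ENNReal.ofNat_ne_top (n := 2))
  calc ∑' k : ℤ, (if (2:ℝ≥0∞) ^ (k-1) < a then (2:ℝ≥0∞) ^ k else 0)
      ≤ ∑' k : ℤ, (if k ≤ K + 1 then (2:ℝ≥0∞) ^ k else 0) := by
        refine ENNReal.tsum_le_tsum fun k => ?_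
        by_cases h : (2:ℝ≥0∞) ^ (k-1) < a
        · have hk : k ≤ K + 1 := by
            by_contra hc
            push_neg at hc
            have h2 : (2:ℝ≥0∞) ^ (K+1) ≤ (2:ℝ≥0∞) ^ (k-1) :=
              ENNReal.zpow_le_of_le (by norm_num) (by omega)
            exact absurd (lt_of_le_of_lt (hK.2.trans h2) h) (lt_irrefl _)
          simp [h, hk]
        · simp [h]
    _ = ∑' j : ℕ, (2:ℝ≥0∞) ^ (K + 1 - (j:ℤ)) := by
        refine (Function.Injective.tsum_eq (f := fun k : ℤ => if k ≤ K + 1 then (2:ℝ≥0∞) ^ k else 0)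
          (g := fun j : ℕ => K + 1 - (j:ℤ)) ?_ ?_).symm.trans ?_
        · intro x y h; simp only at h; omega
        · intro k hk
          simp only [Function.mem_support] at hk
          have hle : k ≤ K + 1 := by
            by_contra h
            simp [h] at hk
          exact ⟨(K + 1 - k).toNat, by simp only; omega⟩
        · congr 1; funext j; rw [if_pos (by omega)]
    _ ≤ 4 * a := by
        have he : ∀ j : ℕ, (2:ℝ≥0∞) ^ (K + 1 - (j:ℤ)) = (2:ℝ≥0∞)^(K+1) * (2⁻¹)^(j:ℕ) := by
          intro j
          rw [sub_eq_add_neg, ENNReal.zpow_add two_ne_zero ENNReal.ofNat_ne_top]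
          congr 1
          rw [ENNReal.zpow_neg, zpow_natCast, ENNReal.inv_pow]
        simp_rw [he]
        rw [ENNReal.tsum_mul_left, ENNReal.tsum_geometric]
        have h1 : (1 - 2⁻¹ : ℝ≥0∞)⁻¹ = 2 := by
          rw [ENNReal.one_sub_inv_two]; simp
        rw [h1]
        have h2 : (2:ℝ≥0∞)^(K+1) * 2 = 4 * 2^K := by
          rw [ENNReal.zpow_add two_ne_zero ENNReal.ofNat_ne_top, zpow_one]
          rw [mul_assoc, mul_comm]
          norm_num
        rw [h2]
        exact mul_le_mul_right hK.1.le _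


-- L2 : Cauchy-Schwarz on a set
theorem cs_set {α : Type*} [MeasurableSpace α] (μ : Measure α) {F : α → ℝ≥0∞}
    (hF : AEMeasurable F μ) (s : Set α) :
    ∫⁻ y in s, F y ∂μ ≤ (∫⁻ y in s, F y ^ 2 ∂μ) ^ ((1:ℝ)/2) * (μ s) ^ ((1:ℝ)/2) := by
  have h22 : Real.HolderConjugate 2 2 := Real.HolderConjugate.two_two
  have := ENNReal.lintegral_mul_le_Lp_mul_Lq (μ.restrict s) h22
    (f := F) (g := fun _ => 1) hF.restrict aemeasurable_const
  simp only [mul_one, one_pow, ENNReal.one_rpow] at this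
  calc ∫⁻ y in s, F y ∂μ ≤ (∫⁻ y in s, F y ^ (2:ℝ) ∂μ) ^ ((1:ℝ)/2) *
        (∫⁻ _ in s, (1:ℝ≥0∞) ∂μ) ^ ((1:ℝ)/2) := by
        simpa using this
    _ = (∫⁻ y in s, F y ^ 2 ∂μ) ^ ((1:ℝ)/2) * (μ s) ^ ((1:ℝ)/2) := by
        rw [setLIntegral_one]
        congr 1
        congr 1
        refine lintegral_congr fun y => ?_
        rw [← ENNReal.rpow_natCast]
        norm_num


-- L3 : Vitali weak-type bound
theorem weak_bound {n : ℕ} {ι : Type} [Countable ι] (F : (Fin n → ℝ) → ℝ≥0∞)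
    (T : Set ι) (c : ι → Fin n → ℝ) (R : ι → ℝ) (hR0 : ∀ i ∈ T, 0 ≤ R i)
    (Rmax : ℝ) (hRmax : ∀ i ∈ T, R i ≤ Rmax) (lam : ℝ≥0∞)
    (hle : ∀ i ∈ T, lam * volume (closedBall (c i) (R i)) ≤ ∫⁻ y in closedBall (c i) (R i), F y) :
    lam * volume (⋃ i ∈ T, closedBall (c i) (R i)) ≤ 4 ^ n * ∫⁻ y, F y := by
  obtain ⟨u, huT, hud, hcov⟩ := Vitali.exists_disjoint_subfamily_covering_enlargement_closedBall
    T c R Rmax hRmax 4 (by norm_num)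
  have hucnt : u.Countable := u.to_countable
  have hsub : (⋃ i ∈ T, closedBall (c i) (R i)) ⊆ ⋃ b ∈ u, closedBall (c b) (4 * R b) := by
    refine iUnion₂_subset fun i hi => ?_
    obtain ⟨b, hb, hsub⟩ := hcov i hi
    exact hsub.trans (subset_iUnion₂ (s := fun b _ => closedBall (c b) (4 * R b)) b hb)
  have hvol4 : ∀ b ∈ u, volume (closedBall (c b) (4 * R b)) ≤
      4 ^ n * volume (closedBall (c b) (R b)) := by
    intro b hb
    have hRb : 0 ≤ R b := hR0 b (huT hb)
    rw [Real.volume_pi_closedBall _ (by positivity), Real.volume_pi_closedBall _ hRb,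
        Fintype.card_fin, show (2:ℝ) * (4 * R b) = 4 * (2 * R b) by ring, mul_pow,
        ENNReal.ofReal_mul (by positivity), ENNReal.ofReal_pow (by norm_num)]
    gcongr
    norm_num
  calc lam * volume (⋃ i ∈ T, closedBall (c i) (R i))
      ≤ lam * volume (⋃ b ∈ u, closedBall (c b) (4 * R b)) := by
        exact mul_le_mul_right (measure_mono hsub) _
    _ ≤ lam * ∑' b : u, volume (closedBall (c b) (4 * R (b:ι))) := by
        exact mul_le_mul_right (measure_biUnion_le _ hucnt _) _
    _ ≤ lam * ∑' b : u, 4 ^ n * volume (closedBall (c b) (R (b:ι))) := by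
        exact mul_le_mul_right (ENNReal.tsum_le_tsum fun b : u => hvol4 b b.2) _
    _ = 4 ^ n * ∑' b : u, lam * volume (closedBall (c b) (R (b:ι))) := by
        rw [ENNReal.tsum_mul_left, ENNReal.tsum_mul_left]
        ring
    _ ≤ 4 ^ n * ∑' b : u, ∫⁻ y in closedBall (c b) (R (b:ι)), F y := by
        exact mul_le_mul_right (ENNReal.tsum_le_tsum fun b : u => hle b (huT b.2)) _
    _ = 4 ^ n * ∫⁻ y in ⋃ b ∈ u, closedBall (c b) (R b), F y := by
        rw [lintegral_biUnion hucnt (fun b _ => measurableSet_closedBall) hud]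
    _ ≤ 4 ^ n * ∫⁻ y, F y := by
        exact mul_le_mul_right (setLIntegral_le_lintegral _ _) _

theorem carleson {n : ℕ} {ι : Type} [Countable ι] {F : (Fin n → ℝ) → ℝ≥0∞}
    (hF : AEMeasurable F volume) (hfin : ∫⁻ x, F x ^ 2 ≠ ⊤)
    (c : ι → Fin n → ℝ) (R : ι → ℝ) (hR : ∀ i, 0 < R i)
    (E : ι → Set (Fin n → ℝ)) (hEm : ∀ i, MeasurableSet (E i))
    (hEsub : ∀ i, E i ⊆ closedBall (c i) (R i))
    (hEd : Pairwise (Function.onFun Disjoint E)) :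
    ∑' i, ((∫⁻ y in closedBall (c i) (R i), F y) / volume (closedBall (c i) (R i))) ^ 2
      * volume (E i) ≤ 32 * 4 ^ n * ∫⁻ x, F x ^ 2 := by
  set B : ι → Set (Fin n → ℝ) := fun i => closedBall (c i) (R i) with hB
  set V : ι → ℝ≥0∞ := fun i => volume (B i) with hVdef
  have hVeq : ∀ i, V i = ENNReal.ofReal ((2 * R i) ^ n) := by
    intro i
    rw [hVdef, hB]
    simp only
    rw [Real.volume_pi_closedBall _ (hR i).le, Fintype.card_fin]
  have hV0 : ∀ i, V i ≠ 0 := by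
    intro i
    rw [hVeq i]
    simp only [ne_eq, ENNReal.ofReal_eq_zero, not_le]
    have := hR i
    positivity
  have hVt : ∀ i, V i ≠ ⊤ := fun i => by rw [hVeq i]; exact ENNReal.ofReal_ne_top
  set a : ι → ℝ≥0∞ := fun i => (∫⁻ y in B i, F y) / V i with ha
  -- the integral over a ball is finite
  have hnum : ∀ i, (∫⁻ y in B i, F y) ≠ ⊤ := by
    intro i
    refine ne_top_of_le_ne_top ?_ (cs_set volume hF (B i))
    exact ENNReal.mul_ne_top
      (ENNReal.rpow_ne_top_of_nonneg (by norm_num)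
        (ne_top_of_le_ne_top hfin (setLIntegral_le_lintegral _ _)))
      (ENNReal.rpow_ne_top_of_nonneg (by norm_num) (hVt i))
  have hat : ∀ i, a i ≠ ⊤ := by
    intro i
    rw [ha]
    exact (ENNReal.div_lt_top (hnum i) (hV0 i)).ne
  -- case n = 0
  rcases Nat.eq_zero_or_pos n with rfl | hn
  · haveI : Subsingleton (Fin 0 → ℝ) := ⟨fun x y => funext fun i => i.elim0⟩
    have hu : volume (univ : Set (Fin 0 → ℝ)) = 1 := by
      rw [show (univ : Set (Fin 0 → ℝ)) = closedBall (fun _ => 0) 0 from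
        (Subsingleton.eq_univ_of_nonempty ⟨_, mem_closedBall_self le_rfl⟩).symm,
        Real.volume_pi_closedBall _ le_rfl]
      simp
    have hBu : ∀ i, B i = univ :=
      fun i => Subsingleton.eq_univ_of_nonempty ⟨c i, mem_closedBall_self (hR i).le⟩
    have hV1 : ∀ i, V i = 1 := by intro i; rw [hVeq i]; simp
    have haeq : ∀ i, a i = ∫⁻ x, F x := by
      intro i
      rw [ha]
      simp only
      rw [hBu i, hV1 i, Measure.restrict_univ]
      simp
    calc ∑' i, a i ^ 2 * volume (E i) = (∫⁻ x, F x) ^ 2 * ∑' i, volume (E i) := by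
          rw [← ENNReal.tsum_mul_left]
          congr 1
          funext i
          rw [haeq i]
      _ ≤ (∫⁻ x, F x) ^ 2 * 1 := by
          refine mul_le_mul_right ?_ _
          rw [← measure_iUnion hEd hEm, ← hu]
          exact measure_mono (subset_univ _)
      _ ≤ 32 * ∫⁻ x, F x ^ 2 := by
          rw [mul_one]
          have h1 : (∫⁻ x, F x) ≤ (∫⁻ x, F x ^ 2) ^ ((1:ℝ)/2) := by
            calc (∫⁻ x, F x) ≤ (∫⁻ x in univ, F x ^ 2) ^ ((1:ℝ)/2) *
                  (volume (univ : Set (Fin 0 → ℝ))) ^ ((1:ℝ)/2) := by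
                  simpa using cs_set volume hF univ
              _ = (∫⁻ x, F x ^ 2) ^ ((1:ℝ)/2) := by
                  rw [hu, Measure.restrict_univ]
                  simp
          calc (∫⁻ x, F x) ^ 2 ≤ ((∫⁻ x, F x ^ 2) ^ ((1:ℝ)/2)) ^ 2 :=
                pow_le_pow_left₀ (zero_le) h1 2
            _ = ∫⁻ x, F x ^ 2 := by
                rw [← ENNReal.rpow_natCast (((∫⁻ x, F x ^ 2) ^ ((1:ℝ)/2))) 2, ← ENNReal.rpow_mul]
                norm_num
            _ ≤ 32 * ∫⁻ x, F x ^ 2 := le_mul_of_one_le_left (zero_le) (by norm_num)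
      _ = 32 * 4 ^ 0 * ∫⁻ x, F x ^ 2 := by norm_num
  · -- main case n ≥ 1
    set T : ℤ → Set ι := fun k => {i | (2:ℝ≥0∞) ^ k < a i ∧ a i ≤ (2:ℝ≥0∞) ^ (k+1)} with hT
    set trunc : ℤ → (Fin n → ℝ) → ℝ≥0∞ :=
      fun k x => if (2:ℝ≥0∞) ^ (k-1) < F x then F x else 0 with htruncdef
    have htwo_ne_top : ∀ k : ℤ, (2:ℝ≥0∞) ^ k ≠ ⊤ :=
      fun k => (ENNReal.zpow_lt_top two_ne_zero ENNReal.ofNat_ne_top k).ne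
    have htwo_ne_zero : ∀ k : ℤ, (2:ℝ≥0∞) ^ k ≠ 0 :=
      fun k => (ENNReal.zpow_pos two_ne_zero ENNReal.ofNat_ne_top k).ne'
    -- truncation bound
    have htrunc : ∀ k : ℤ, ∀ i, (2:ℝ≥0∞) ^ k < a i →
        (2:ℝ≥0∞) ^ (k-1) * V i ≤ ∫⁻ y in B i, trunc k y := by
      intro k i hai
      have h1 : ∀ y, F y ≤ trunc k y + (2:ℝ≥0∞) ^ (k-1) := by
        intro y
        rw [htruncdef]
        simp only
        by_cases h : (2:ℝ≥0∞) ^ (k-1) < F y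
        · simp [h]
        · push_neg at h
          simpa [if_neg (not_lt.mpr h)] using h
      have h2 : (∫⁻ y in B i, F y) ≤ (∫⁻ y in B i, trunc k y) + (2:ℝ≥0∞) ^ (k-1) * V i := by
        calc (∫⁻ y in B i, F y) ≤ ∫⁻ y in B i, (trunc k y + (2:ℝ≥0∞) ^ (k-1)) :=
              lintegral_mono h1
          _ = (∫⁻ y in B i, trunc k y) + (2:ℝ≥0∞) ^ (k-1) * V i := by
              rw [lintegral_add_right _ measurable_const, setLIntegral_const]
      have h3 : (2:ℝ≥0∞) ^ k * V i ≤ ∫⁻ y in B i, F y :=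
        ENNReal.mul_le_of_le_div hai.le
      have e2 : (2:ℝ≥0∞) ^ (k-1) * 2 = 2 ^ k := by
        rw [show (2:ℝ≥0∞) ^ k = 2 ^ ((k-1)+1) by congr 1; omega,
          ENNReal.zpow_add two_ne_zero ENNReal.ofNat_ne_top, zpow_one]
      have h4 : (2:ℝ≥0∞) ^ k * V i = (2:ℝ≥0∞) ^ (k-1) * V i + (2:ℝ≥0∞) ^ (k-1) * V i := by
        rw [← add_mul, ← mul_two, e2]
      have h5 := h3.trans h2
      rw [h4] at h5
      exact (ENNReal.add_le_add_iff_right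
        (ENNReal.mul_ne_top (htwo_ne_top _) (hVt i))).mp h5
    -- radius bound on each level
    have hradius : ∀ k : ℤ, ∃ Rmax : ℝ, ∀ i ∈ T k, R i ≤ Rmax := by
      intro k
      set D : ℝ≥0∞ := (∫⁻ x, F x ^ 2) ^ ((1:ℝ)/2) with hD
      have hDt : D ≠ ⊤ := ENNReal.rpow_ne_top_of_nonneg (by norm_num) hfin
      set W : ℝ≥0∞ := (D / 2 ^ k) * (D / 2 ^ k) with hW
      have hWt : W ≠ ⊤ := ENNReal.mul_ne_top
        (ENNReal.div_lt_top hDt (htwo_ne_zero k)).ne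
        (ENNReal.div_lt_top hDt (htwo_ne_zero k)).ne
      refine ⟨max 1 W.toReal, fun i hi => ?_⟩
      have hai : (2:ℝ≥0∞) ^ k < a i := hi.1
      have h3 : (2:ℝ≥0∞) ^ k * V i ≤ ∫⁻ y in B i, F y :=
        ENNReal.mul_le_of_le_div hai.le
      have hcs : (∫⁻ y in B i, F y) ≤ D * (V i) ^ ((1:ℝ)/2) := by
        refine (cs_set volume hF (B i)).trans ?_
        gcongr
        · exact ENNReal.rpow_le_rpow (setLIntegral_le_lintegral _ _) (by norm_num)
      set s : ℝ≥0∞ := (V i) ^ ((1:ℝ)/2) with hs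
      have hs0 : s ≠ 0 := by
        rw [hs]
        simp [ENNReal.rpow_eq_zero_iff, hV0 i, hVt i]
      have hst : s ≠ ⊤ := ENNReal.rpow_ne_top_of_nonneg (by norm_num) (hVt i)
      have hVss : V i = s * s := by
        rw [hs, ← ENNReal.rpow_add _ _ (hV0 i) (hVt i)]
        norm_num
      have h6 : (2:ℝ≥0∞) ^ k * s * s ≤ D * s := by
        calc (2:ℝ≥0∞) ^ k * s * s = (2:ℝ≥0∞) ^ k * V i := by rw [hVss]; ring
          _ ≤ ∫⁻ y in B i, F y := h3
          _ ≤ D * s := hcs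
      have h7 : (2:ℝ≥0∞) ^ k * s ≤ D := by
        have := (ENNReal.mul_le_mul_iff_left hs0 hst).mp h6
        exact this
      have h8 : s ≤ D / 2 ^ k := by
        rw [ENNReal.le_div_iff_mul_le (Or.inl (htwo_ne_zero k)) (Or.inl (htwo_ne_top k))]
        rw [mul_comm]
        exact h7
      have h9 : V i ≤ W := by rw [hVss, hW]; exact mul_le_mul' h8 h8
      have h10 : (2 * R i) ^ n ≤ W.toReal := by
        rw [hVeq i] at h9
        exact (ENNReal.ofReal_le_iff_le_toReal hWt).mp h9
      by_cases h11 : 2 * R i ≤ 1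
      · have := hR i
        calc R i ≤ 2 * R i := by linarith
          _ ≤ 1 := h11
          _ ≤ max 1 W.toReal := le_max_left _ _
      · push_neg at h11
        have h12 : 2 * R i ≤ (2 * R i) ^ n := le_self_pow₀ (by linarith) hn.ne'
        have := hR i
        calc R i ≤ 2 * R i := by linarith
          _ ≤ W.toReal := h12.trans h10
          _ ≤ max 1 W.toReal := le_max_right _ _
    -- level decomposition
    have step1 : ∀ i, a i ^ 2 * volume (E i) ≤
        ∑' k : ℤ, (if i ∈ T k then ((2:ℝ≥0∞) ^ (k+1)) ^ 2 * volume (E i) else 0) := by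
      intro i
      rcases eq_or_ne (a i) 0 with h | h
      · simp [h]
      · obtain ⟨K, hK⟩ := ENNReal.exists_mem_Ioc_zpow h (hat i) (by norm_num) (ENNReal.ofNat_ne_top (n := 2))
        have hiT : i ∈ T K := ⟨hK.1, hK.2⟩
        calc a i ^ 2 * volume (E i) ≤ ((2:ℝ≥0∞) ^ (K+1)) ^ 2 * volume (E i) :=
              mul_le_mul_left (pow_le_pow_left₀ (zero_le) hK.2 2) _
          _ = (if i ∈ T K then ((2:ℝ≥0∞) ^ (K+1)) ^ 2 * volume (E i) else 0) := by
              rw [if_pos hiT]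
          _ ≤ _ := ENNReal.le_tsum K
    -- weak type estimate per level
    have step3 : ∀ k : ℤ, ∑' i, (if i ∈ T k then ((2:ℝ≥0∞) ^ (k+1)) ^ 2 * volume (E i) else 0)
        ≤ (2:ℝ≥0∞) ^ (k+3) * (4 ^ n * ∫⁻ x, trunc k x) := by
      intro k
      have hre : ∀ i, (if i ∈ T k then ((2:ℝ≥0∞) ^ (k+1)) ^ 2 * volume (E i) else 0)
          = ((2:ℝ≥0∞) ^ (k+1)) ^ 2 * (if i ∈ T k then volume (E i) else 0) := by
        intro i
        by_cases h : i ∈ T k <;> simp [h]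
      rw [tsum_congr hre, ENNReal.tsum_mul_left]
      have hsum : ∑' i, (if i ∈ T k then volume (E i) else 0) = volume (⋃ i ∈ T k, E i) := by
        rw [measure_biUnion (T k).to_countable (fun i _ j _ hij => hEd hij)
          (fun i _ => hEm i), tsum_subtype (T k) (fun i => volume (E i))]
        congr 1
        funext i
        rw [Set.indicator_apply]
      rw [hsum]
      have hsub : volume (⋃ i ∈ T k, E i) ≤ volume (⋃ i ∈ T k, B i) :=
        measure_mono (iUnion₂_mono fun i _ => hEsub i)
      obtain ⟨Rmax, hRmax⟩ := hradius k
      have hweak : (2:ℝ≥0∞) ^ (k-1) * volume (⋃ i ∈ T k, B i) ≤ 4 ^ n * ∫⁻ x, trunc k x :=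
        weak_bound (trunc k) (T k) c R (fun i _ => (hR i).le) Rmax hRmax _
          (fun i hi => htrunc k i hi.1)
      have hpow : ((2:ℝ≥0∞) ^ (k+1)) ^ 2 = (2:ℝ≥0∞) ^ (k+3) * (2:ℝ≥0∞) ^ (k-1) := by
        rw [sq, ← ENNReal.zpow_add two_ne_zero ENNReal.ofNat_ne_top,
          ← ENNReal.zpow_add two_ne_zero ENNReal.ofNat_ne_top]
        congr 1
        omega
      calc ((2:ℝ≥0∞) ^ (k+1)) ^ 2 * volume (⋃ i ∈ T k, E i)
          ≤ ((2:ℝ≥0∞) ^ (k+1)) ^ 2 * volume (⋃ i ∈ T k, B i) := mul_le_mul_right hsub _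
        _ = (2:ℝ≥0∞) ^ (k+3) * ((2:ℝ≥0∞) ^ (k-1) * volume (⋃ i ∈ T k, B i)) := by
            rw [hpow, mul_assoc]
        _ ≤ (2:ℝ≥0∞) ^ (k+3) * (4 ^ n * ∫⁻ x, trunc k x) := mul_le_mul_right hweak _
    -- measurability of truncations
    have htm : ∀ k : ℤ, AEMeasurable (trunc k) volume := by
      intro k
      have : Measurable (fun t : ℝ≥0∞ => if (2:ℝ≥0∞) ^ (k-1) < t then t else 0) := by
        exact Measurable.ite measurableSet_Ioi measurable_id measurable_const
      exact this.comp_aemeasurable hF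
    -- pointwise geometric bound
    have hpt : ∀ x, ∑' k : ℤ, (2:ℝ≥0∞) ^ (k+3) * trunc k x ≤ 32 * F x ^ 2 := by
      intro x
      have hre : ∀ k : ℤ, (2:ℝ≥0∞) ^ (k+3) * trunc k x
          = 8 * F x * (if (2:ℝ≥0∞) ^ (k-1) < F x then (2:ℝ≥0∞) ^ k else 0) := by
        intro k
        rw [htruncdef]
        simp only
        by_cases h : (2:ℝ≥0∞) ^ (k-1) < F x
        · rw [if_pos h, if_pos h, ENNReal.zpow_add two_ne_zero ENNReal.ofNat_ne_top]
          have : (2:ℝ≥0∞) ^ (3:ℤ) = 8 := by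
            rw [show (3:ℤ) = ((3:ℕ):ℤ) by norm_num, zpow_natCast]
            norm_num
          rw [this]
          ring
        · rw [if_neg h, if_neg h]
          simp
      rw [tsum_congr hre, ENNReal.tsum_mul_left]
      calc 8 * F x * ∑' k : ℤ, (if (2:ℝ≥0∞) ^ (k-1) < F x then (2:ℝ≥0∞) ^ k else 0)
          ≤ 8 * F x * (4 * F x) := mul_le_mul_right (geom_aux (F x)) _
        _ = 32 * F x ^ 2 := by ring
    -- put everything together
    calc ∑' i, a i ^ 2 * volume (E i)
        ≤ ∑' i, ∑' k : ℤ, (if i ∈ T k then ((2:ℝ≥0∞) ^ (k+1)) ^ 2 * volume (E i) else 0) :=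
          ENNReal.tsum_le_tsum step1
      _ = ∑' k : ℤ, ∑' i, (if i ∈ T k then ((2:ℝ≥0∞) ^ (k+1)) ^ 2 * volume (E i) else 0) :=
          ENNReal.tsum_comm
      _ ≤ ∑' k : ℤ, (2:ℝ≥0∞) ^ (k+3) * (4 ^ n * ∫⁻ x, trunc k x) :=
          ENNReal.tsum_le_tsum step3
      _ = 4 ^ n * ∑' k : ℤ, ∫⁻ x, (2:ℝ≥0∞) ^ (k+3) * trunc k x := by
          rw [← ENNReal.tsum_mul_left]
          congr 1
          funext k
          rw [lintegral_const_mul' _ _ (htwo_ne_top _)]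
          ring
      _ = 4 ^ n * ∫⁻ x, ∑' k : ℤ, (2:ℝ≥0∞) ^ (k+3) * trunc k x := by
          rw [lintegral_tsum (fun k => ((htm k).const_mul _))]
      _ ≤ 4 ^ n * ∫⁻ x, 32 * F x ^ 2 := by
          exact mul_le_mul_right (lintegral_mono hpt) _
      _ = 32 * 4 ^ n * ∫⁻ x, F x ^ 2 := by
          rw [lintegral_const_mul' _ _ (by norm_num)]
          ring

end SparseAux

open MeasureTheory
open scoped ENNReal

/-- The cube with center `c` and half side length `r`. -/
def centeredCube (n : ℕ) (c : Fin n → ℝ) (r : ℝ) : Set (Fin n → ℝ) :=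
  {y | ∀ i, |y i - c i| ≤ r}

theorem centeredCube_eq_closedBall (n : ℕ) (c : Fin n → ℝ) {r : ℝ} (hr : 0 ≤ r) :
    centeredCube n c r = Metric.closedBall c r := by
  ext y
  simp [centeredCube, Metric.mem_closedBall, dist_pi_le_iff hr, Real.dist_eq]

theorem sq_fin (x : ℝ≥0∞) : (x ^ ((1:ℝ)/2)) ^ 2 = x := by
  rw [← ENNReal.rpow_natCast (x ^ ((1:ℝ)/2)) 2, ← ENNReal.rpow_mul]
  norm_num

theorem lintegral_sq_ne_top {n : ℕ} {f : (Fin n → ℝ) → ℝ} (hf : ∀ x, 0 ≤ f x)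
    (h2 : MemLp f 2 volume) : ∫⁻ x, ENNReal.ofReal (f x) ^ 2 ≠ ⊤ := by
  have h := h2.2
  rw [eLpNorm_eq_lintegral_rpow_enorm_toReal (by norm_num) (by norm_num)] at h
  rw [ENNReal.rpow_lt_top_iff_of_pos (by norm_num : (0:ℝ) < 1 / ENNReal.toReal 2)] at h
  have heq : ∀ x, ‖f x‖ₑ ^ ENNReal.toReal 2 = ENNReal.ofReal (f x) ^ 2 := by
    intro x
    rw [Real.enorm_eq_ofReal (hf x), ENNReal.toReal_ofNat, ← ENNReal.rpow_natCast]
    norm_num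
  rw [show (fun x => ‖f x‖ₑ ^ ENNReal.toReal 2)
      = fun x => ENNReal.ofReal (f x) ^ 2 from funext heq] at h
  exact h.ne

/-- A sparse family of cubes satisfies the bilinear form bound
`∑_I |I| (|I|⁻¹ ∫_{5I} f)(|I|⁻¹ ∫_I g) ≲ ‖f‖₂ ‖g‖₂`. -/
theorem stmt_8 (n : ℕ) (c0 : ℝ) (hc0 : 0 < c0) :
    ∃ C : ℝ, 0 < C ∧
      ∀ (ι : Type) (_ : Countable ι) (c : ι → Fin n → ℝ) (r : ι → ℝ), (∀ i, 0 < r i) →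
        ∀ (E : ι → Set (Fin n → ℝ)), (∀ i, MeasurableSet (E i)) →
          (∀ i, E i ⊆ centeredCube n (c i) (r i)) →
          (∀ i j, i ≠ j → Disjoint (E i) (E j)) →
          (∀ i, ENNReal.ofReal c0 * volume (centeredCube n (c i) (r i)) ≤ volume (E i)) →
          ∀ (f g : (Fin n → ℝ) → ℝ), (∀ x, 0 ≤ f x) → (∀ x, 0 ≤ g x) →
            MemLp f 2 volume → MemLp g 2 volume →
            (∑' i, (∫⁻ y in centeredCube n (c i) (5 * r i), ENNReal.ofReal (f y)) *
                (∫⁻ y in centeredCube n (c i) (r i), ENNReal.ofReal (g y)) /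
                volume (centeredCube n (c i) (r i))) ≤
              ENNReal.ofReal C * (∫⁻ x, ENNReal.ofReal (f x) ^ 2) ^ ((1 : ℝ) / 2) *
                (∫⁻ x, ENNReal.ofReal (g x) ^ 2) ^ ((1 : ℝ) / 2) := by
  classical
  refine ⟨(5 ^ n * 32 * 4 ^ n) / c0 + 1, by positivity, ?_⟩
  intro ι hcnt c r hr E hEm hEsub hEdis hEc f g hfge hgge hf2 hg2
  haveI : Countable ι := hcnt
  set F : (Fin n → ℝ) → ℝ≥0∞ := fun x => ENNReal.ofReal (f x) with hFdef
  set G : (Fin n → ℝ) → ℝ≥0∞ := fun x => ENNReal.ofReal (g x) with hGdef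
  have hFm : AEMeasurable F volume :=
    ENNReal.measurable_ofReal.comp_aemeasurable hf2.1.aemeasurable
  have hGm : AEMeasurable G volume :=
    ENNReal.measurable_ofReal.comp_aemeasurable hg2.1.aemeasurable
  have hFfin : ∫⁻ x, F x ^ 2 ≠ ⊤ := lintegral_sq_ne_top hfge hf2
  have hGfin : ∫⁻ x, G x ^ 2 ≠ ⊤ := lintegral_sq_ne_top hgge hg2
  -- cubes are closed balls
  have hc5 : ∀ i, centeredCube n (c i) (5 * r i) = Metric.closedBall (c i) (5 * r i) :=
    fun i => centeredCube_eq_closedBall n (c i) (by have := hr i; positivity)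
  have hc1 : ∀ i, centeredCube n (c i) (r i) = Metric.closedBall (c i) (r i) :=
    fun i => centeredCube_eq_closedBall n (c i) (hr i).le
  set B1 : ι → Set (Fin n → ℝ) := fun i => Metric.closedBall (c i) (r i) with hB1
  set B5 : ι → Set (Fin n → ℝ) := fun i => Metric.closedBall (c i) (5 * r i) with hB5
  set V1 : ι → ℝ≥0∞ := fun i => volume (B1 i) with hV1def
  set V5 : ι → ℝ≥0∞ := fun i => volume (B5 i) with hV5def
  have hV1eq : ∀ i, V1 i = ENNReal.ofReal ((2 * r i) ^ n) := by
    intro i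
    rw [hV1def, hB1]
    simp only
    rw [Real.volume_pi_closedBall _ (hr i).le, Fintype.card_fin]
  have hV10 : ∀ i, V1 i ≠ 0 := by
    intro i
    rw [hV1eq i]
    simp only [ne_eq, ENNReal.ofReal_eq_zero, not_le]
    have := hr i
    positivity
  have hV1t : ∀ i, V1 i ≠ ⊤ := fun i => by rw [hV1eq i]; exact ENNReal.ofReal_ne_top
  have hV51 : ∀ i, V5 i = 5 ^ n * V1 i := by
    intro i
    rw [hV5def, hV1eq i, hB5]
    simp only
    rw [Real.volume_pi_closedBall _ (by have := hr i; positivity), Fintype.card_fin,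
      show (2 * (5 * r i)) ^ n = 5 ^ n * (2 * r i) ^ n by rw [← mul_pow]; ring_nf,
      ENNReal.ofReal_mul (by positivity), ENNReal.ofReal_pow (by norm_num)]
    norm_num
  have hV5t : ∀ i, V5 i ≠ ⊤ := by
    intro i
    rw [hV51 i]
    exact ENNReal.mul_ne_top (by simp) (hV1t i)
  have hV50 : ∀ i, V5 i ≠ 0 := by
    intro i
    rw [hV51 i]
    exact mul_ne_zero (by simp) (hV10 i)
  set aF : ι → ℝ≥0∞ := fun i => (∫⁻ y in B5 i, F y) / V5 i with haF
  set aG : ι → ℝ≥0∞ := fun i => (∫⁻ y in B1 i, G y) / V1 i with haG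
  have hc0' : (ENNReal.ofReal c0) ≠ 0 := (ENNReal.ofReal_pos.mpr hc0).ne'
  have hc0t : (ENNReal.ofReal c0) ≠ ⊤ := ENNReal.ofReal_ne_top
  have hEvol : ∀ i, volume (E i) ≠ ⊤ := by
    intro i
    refine ne_top_of_le_ne_top (hV1t i) (measure_mono ?_)
    rw [hB1]
    simpa only [← hc1 i] using hEsub i
  -- pointwise bound on each term
  have hterm : ∀ i, (∫⁻ y in B5 i, F y) * (∫⁻ y in B1 i, G y) / V1 i ≤
      (ENNReal.ofReal c0)⁻¹ * 5 ^ n *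
      ((aF i * (volume (E i)) ^ ((1:ℝ)/2)) * (aG i * (volume (E i)) ^ ((1:ℝ)/2))) := by
    intro i
    have hA : (∫⁻ y in B5 i, F y) = aF i * V5 i := by
      rw [haF]
      simp only
      rw [ENNReal.div_mul_cancel (hV50 i) (hV5t i)]
    have hBint : (∫⁻ y in B1 i, G y) = aG i * V1 i := by
      rw [haG]
      simp only
      rw [ENNReal.div_mul_cancel (hV10 i) (hV1t i)]
    have hE2 : volume (E i) = (volume (E i)) ^ ((1:ℝ)/2) * (volume (E i)) ^ ((1:ℝ)/2) := by
      rcases eq_or_ne (volume (E i)) 0 with h | h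
      · rw [h]
        simp
      · rw [← ENNReal.rpow_add _ _ h (hEvol i)]
        norm_num
    calc (∫⁻ y in B5 i, F y) * (∫⁻ y in B1 i, G y) / V1 i
        = aF i * V5 i * (aG i * V1 i) / V1 i := by rw [hA, hBint]
      _ = aF i * V5 i * aG i * (V1 i * (V1 i)⁻¹) := by
          rw [div_eq_mul_inv]
          ring
      _ = aF i * aG i * V5 i := by
          rw [ENNReal.mul_inv_cancel (hV10 i) (hV1t i), mul_one]
          ring
      _ = 5 ^ n * (aF i * aG i * V1 i) := by rw [hV51 i]; ring
      _ ≤ 5 ^ n * (aF i * aG i * ((ENNReal.ofReal c0)⁻¹ * volume (E i))) := by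
          refine mul_le_mul_right (mul_le_mul_right ?_ _) _
          have h1 : ENNReal.ofReal c0 * V1 i ≤ volume (E i) := by
            have := hEc i
            rwa [hc1 i] at this
          calc V1 i = (ENNReal.ofReal c0)⁻¹ * (ENNReal.ofReal c0 * V1 i) := by
                rw [← mul_assoc, ENNReal.inv_mul_cancel hc0' hc0t, one_mul]
            _ ≤ (ENNReal.ofReal c0)⁻¹ * volume (E i) := mul_le_mul_right h1 _
      _ = (ENNReal.ofReal c0)⁻¹ * 5 ^ n *
          ((aF i * (volume (E i)) ^ ((1:ℝ)/2)) * (aG i * (volume (E i)) ^ ((1:ℝ)/2))) := by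
          conv_lhs => rw [hE2]
          ring
  -- Carleson embedding on both factors
  have hcarF : ∑' i, aF i ^ 2 * volume (E i) ≤ 32 * 4 ^ n * ∫⁻ x, F x ^ 2 := by
    refine SparseAux.carleson hFm hFfin c (fun i => 5 * r i)
      (fun i => by have := hr i; positivity) E hEm ?_ (fun i j hij => hEdis i j hij)
    intro i
    refine (hEsub i).trans ?_
    rw [hc1 i]
    refine Metric.closedBall_subset_closedBall ?_
    show r i ≤ 5 * r i
    have := hr i
    linarith
  have hcarG : ∑' i, aG i ^ 2 * volume (E i) ≤ 32 * 4 ^ n * ∫⁻ x, G x ^ 2 := by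
    refine SparseAux.carleson hGm hGfin c r hr E hEm ?_ (fun i j hij => hEdis i j hij)
    intro i
    rw [← hc1 i]
    exact hEsub i
  -- assemble
  have hstep : (∑' i, (∫⁻ y in B5 i, F y) * (∫⁻ y in B1 i, G y) / V1 i) ≤
      (ENNReal.ofReal c0)⁻¹ * 5 ^ n * ((32 * 4 ^ n * ∫⁻ x, F x ^ 2) ^ ((1:ℝ)/2) *
        (32 * 4 ^ n * ∫⁻ x, G x ^ 2) ^ ((1:ℝ)/2)) := by
    calc (∑' i, (∫⁻ y in B5 i, F y) * (∫⁻ y in B1 i, G y) / V1 i)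
        ≤ ∑' i, (ENNReal.ofReal c0)⁻¹ * 5 ^ n *
          ((aF i * (volume (E i)) ^ ((1:ℝ)/2)) * (aG i * (volume (E i)) ^ ((1:ℝ)/2))) :=
          ENNReal.tsum_le_tsum hterm
      _ = (ENNReal.ofReal c0)⁻¹ * 5 ^ n *
          ∑' i, (aF i * (volume (E i)) ^ ((1:ℝ)/2)) * (aG i * (volume (E i)) ^ ((1:ℝ)/2)) :=
          ENNReal.tsum_mul_left
      _ ≤ (ENNReal.ofReal c0)⁻¹ * 5 ^ n *
          ((∑' i, (aF i * (volume (E i)) ^ ((1:ℝ)/2)) ^ 2) ^ ((1:ℝ)/2) *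
           (∑' i, (aG i * (volume (E i)) ^ ((1:ℝ)/2)) ^ 2) ^ ((1:ℝ)/2)) :=
          mul_le_mul_right (SparseAux.tsum_cs _ _) _
      _ = (ENNReal.ofReal c0)⁻¹ * 5 ^ n *
          ((∑' i, aF i ^ 2 * volume (E i)) ^ ((1:ℝ)/2) *
           (∑' i, aG i ^ 2 * volume (E i)) ^ ((1:ℝ)/2)) := by
          have e1 : ∀ h : ι → ℝ≥0∞, ∑' i, (h i * volume (E i) ^ ((1:ℝ)/2)) ^ 2
              = ∑' i, h i ^ 2 * volume (E i) :=
            fun h => tsum_congr fun i => by rw [mul_pow, sq_fin]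
          rw [e1 aF, e1 aG]
      _ ≤ (ENNReal.ofReal c0)⁻¹ * 5 ^ n * ((32 * 4 ^ n * ∫⁻ x, F x ^ 2) ^ ((1:ℝ)/2) *
          (32 * 4 ^ n * ∫⁻ x, G x ^ 2) ^ ((1:ℝ)/2)) := by
          refine mul_le_mul_right (mul_le_mul' ?_ ?_) _
          · exact ENNReal.rpow_le_rpow hcarF (by norm_num)
          · exact ENNReal.rpow_le_rpow hcarG (by norm_num)
  -- final constant juggling
  have hconst : ((ENNReal.ofReal c0)⁻¹ * 5 ^ n * (32 * 4 ^ n : ℝ≥0∞)) ≤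
      ENNReal.ofReal ((5 ^ n * 32 * 4 ^ n) / c0 + 1) := by
    have h1 : ((5:ℝ≥0∞) ^ n * (32 * 4 ^ n)) = ENNReal.ofReal (5 ^ n * 32 * 4 ^ n) := by
      rw [ENNReal.ofReal_mul (by positivity), ENNReal.ofReal_mul (by positivity),
        ENNReal.ofReal_pow (by norm_num), ENNReal.ofReal_pow (by norm_num)]
      norm_num
      ring
    calc (ENNReal.ofReal c0)⁻¹ * 5 ^ n * (32 * 4 ^ n : ℝ≥0∞)
        = ENNReal.ofReal (5 ^ n * 32 * 4 ^ n) / ENNReal.ofReal c0 := by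
          rw [← h1, div_eq_mul_inv]
          ring
      _ = ENNReal.ofReal ((5 ^ n * 32 * 4 ^ n) / c0) := (ENNReal.ofReal_div_of_pos hc0).symm
      _ ≤ ENNReal.ofReal ((5 ^ n * 32 * 4 ^ n) / c0 + 1) := by
          refine ENNReal.ofReal_le_ofReal ?_
          linarith
  have hfinal : (∑' i, (∫⁻ y in B5 i, F y) * (∫⁻ y in B1 i, G y) / V1 i) ≤
      ENNReal.ofReal ((5 ^ n * 32 * 4 ^ n) / c0 + 1) * (∫⁻ x, F x ^ 2) ^ ((1:ℝ)/2) *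
        (∫⁻ x, G x ^ 2) ^ ((1:ℝ)/2) := by
    refine hstep.trans ?_
    have hm : (32 * 4 ^ n : ℝ≥0∞) ≠ 0 := mul_ne_zero (by norm_num) (pow_ne_zero _ (by norm_num))
    have hmt : (32 * 4 ^ n : ℝ≥0∞) ≠ ⊤ := by
      exact ENNReal.mul_ne_top (by norm_num) (by simp)
    have hsplit : ∀ X : ℝ≥0∞, (32 * 4 ^ n * X) ^ ((1:ℝ)/2) =
        (32 * 4 ^ n : ℝ≥0∞) ^ ((1:ℝ)/2) * X ^ ((1:ℝ)/2) :=
      fun X => ENNReal.mul_rpow_of_nonneg _ _ (by norm_num)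
    have hmm : (32 * 4 ^ n : ℝ≥0∞) ^ ((1:ℝ)/2) * (32 * 4 ^ n : ℝ≥0∞) ^ ((1:ℝ)/2)
        = 32 * 4 ^ n := by
      rw [← ENNReal.rpow_add _ _ hm hmt]
      norm_num
    calc (ENNReal.ofReal c0)⁻¹ * 5 ^ n * ((32 * 4 ^ n * ∫⁻ x, F x ^ 2) ^ ((1:ℝ)/2) *
          (32 * 4 ^ n * ∫⁻ x, G x ^ 2) ^ ((1:ℝ)/2))
        = ((ENNReal.ofReal c0)⁻¹ * 5 ^ n *
            ((32 * 4 ^ n : ℝ≥0∞) ^ ((1:ℝ)/2) * (32 * 4 ^ n : ℝ≥0∞) ^ ((1:ℝ)/2))) *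
          ((∫⁻ x, F x ^ 2) ^ ((1:ℝ)/2) * (∫⁻ x, G x ^ 2) ^ ((1:ℝ)/2)) := by
          rw [hsplit, hsplit]
          ring
      _ = ((ENNReal.ofReal c0)⁻¹ * 5 ^ n * (32 * 4 ^ n)) *
          ((∫⁻ x, F x ^ 2) ^ ((1:ℝ)/2) * (∫⁻ x, G x ^ 2) ^ ((1:ℝ)/2)) := by
          rw [hmm]
      _ ≤ ENNReal.ofReal ((5 ^ n * 32 * 4 ^ n) / c0 + 1) *
          ((∫⁻ x, F x ^ 2) ^ ((1:ℝ)/2) * (∫⁻ x, G x ^ 2) ^ ((1:ℝ)/2)) :=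
          mul_le_mul_left hconst _
      _ = ENNReal.ofReal ((5 ^ n * 32 * 4 ^ n) / c0 + 1) * (∫⁻ x, F x ^ 2) ^ ((1:ℝ)/2) *
          (∫⁻ x, G x ^ 2) ^ ((1:ℝ)/2) := by ring
  -- rewrite the goal in terms of balls
  have hgoal : (∑' i, (∫⁻ y in centeredCube n (c i) (5 * r i), ENNReal.ofReal (f y)) *
      (∫⁻ y in centeredCube n (c i) (r i), ENNReal.ofReal (g y)) /
      volume (centeredCube n (c i) (r i)))
      = ∑' i, (∫⁻ y in B5 i, F y) * (∫⁻ y in B1 i, G y) / V1 i := by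
    refine tsum_congr fun i => ?_
    rw [hc5 i, hc1 i]
  rw [hgoal]
  exact hfinal
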